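/- Assume conditions (C.1) and (C.2) hold. If the family (d_t)_{t∈I} is increasing (i.e. d_s(x,x̃) ≤ d_t(x,x̃) for all s ≤ t and x, x̃ ∈ X) and ∫_{I(t)} λ(t,s)^p μ(ds) < ∞ for all t ∈ I, then Ψ is sequentially continuous: whenever a sequence (x_n) in X satisfies lim_{n→∞} d_t(x_n,x) = 0 for all t ∈ I and some x ∈ X, then lim_{n→∞} d_t(Ψ(x_n),Ψ(x)) = 0 for all t ∈ I. -/

import Mathlib

open MeasureTheory ENNReal Filter

/-- **Sequential continuity of the evolution operator** (Lemma 7 of the paper, the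
implication (i) ⇒ (iii)): under (C.1) and (C.2), if the family `(d_t)_{t ∈ I}` is
increasing and `∫_{I(t)} λ(t,s)^p μ(ds) < ∞` for all `t ∈ I`, then `Ψ` is sequentially
continuous: whenever `d_t(x_n, x) → 0` for all `t`, also `d_t(Ψ(x_n), Ψ(x)) → 0`
for all `t`. -/
theorem sequential_continuity {I X : Type*} [MeasurableSpace I] [Preorder I]
    [Nonempty X]
    (hΔ : MeasurableSet {q : I × I | q.2 ≤ q.1})
    (d : I → X → X → ℝ≥0∞)
    (hd0 : ∀ x y : X, x = y ↔ ∀ t : I, d t x y = 0)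
    (hdmeas : ∀ x y : X, Measurable fun t : I => d t x y)
    (Ψ : X → X)
    (Λ : I → X → X → ℝ≥0∞) (hΛmeas : ∀ x y : X, Measurable fun t : I => Λ t x y)
    (μ : Measure I) [SigmaFinite μ]
    (p : ℝ) (hp : 1 ≤ p)
    (lam : I → I → ℝ≥0∞)
    (hlam : Measurable fun q : {q : I × I // q.2 ≤ q.1} => lam q.1.1 q.1.2)
    (hC1a : ∀ (t : I) (x y : X),
      d t (Ψ x) (Ψ y) ≤ (∫⁻ s in {s : I | s ≤ t}, lam t s ^ p * Λ s x y ^ p ∂μ) ^ (1 / p))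
    (hC1b : ∀ (t : I) (x y : X), Λ t x y ≤ d t x y)
    (hC2refl : ∀ (t : I) (x : X), d t x x = 0)
    (hC2symm : ∀ (t : I) (x y : X), d t x y = d t y x)
    (hC2triangle : ∀ (t : I) (x y z : X), d t x z ≤ d t x y + d t y z)
    (hincr : ∀ s t : I, s ≤ t → ∀ x y : X, d s x y ≤ d t x y)
    (hint : ∀ t : I, (∫⁻ s in {s : I | s ≤ t}, lam t s ^ p ∂μ) < ∞) :
    ∀ (x : ℕ → X) (y : X),
      (∀ t : I, Tendsto (fun n : ℕ => d t (x n) y) atTop (nhds 0)) →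
      ∀ t : I, Tendsto (fun n : ℕ => d t (Ψ (x n)) (Ψ y)) atTop (nhds 0) := by

  intro x y h t
  have hp0 : (0:ℝ) < p := lt_of_lt_of_le one_pos hp
  have hip : (0:ℝ) ≤ 1 / p := by positivity
  set C : ℝ≥0∞ := (∫⁻ s in {s : I | s ≤ t}, lam t s ^ p ∂μ) ^ (1 / p) with hC
  have hCtop : C ≠ ∞ := by
    exact (ENNReal.rpow_lt_top_of_nonneg hip (hint t).ne).ne
  -- key bound whenever d t (x n) y is finite
  have key : ∀ n : ℕ, d t (x n) y ≠ ∞ →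
      d t (Ψ (x n)) (Ψ y) ≤ d t (x n) y * C := by
    intro n hfin
    set c := d t (x n) y with hc
    have hcp : c ^ p ≠ ∞ := (ENNReal.rpow_lt_top_of_nonneg hp0.le hfin).ne
    calc d t (Ψ (x n)) (Ψ y)
        ≤ (∫⁻ s in {s : I | s ≤ t}, lam t s ^ p * Λ s (x n) y ^ p ∂μ) ^ (1 / p) :=
          hC1a t (x n) y
      _ ≤ (∫⁻ s in {s : I | s ≤ t}, c ^ p * lam t s ^ p ∂μ) ^ (1 / p) := by
          refine ENNReal.rpow_le_rpow ?_ hip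
          have hS : MeasurableSet {s : I | s ≤ t} :=
            measurable_prodMk_left hΔ
          refine lintegral_mono_ae ((ae_restrict_iff' hS).2 (Eventually.of_forall ?_))
          intro s hs
          rw [mul_comm]
          refine mul_le_mul_left ?_ _
          exact ENNReal.rpow_le_rpow ((hC1b s (x n) y).trans (hincr s t hs (x n) y)) hp0.le
      _ = (c ^ p * ∫⁻ s in {s : I | s ≤ t}, lam t s ^ p ∂μ) ^ (1 / p) := by
          rw [lintegral_const_mul' _ _ hcp]
      _ = c * C := by
          rw [ENNReal.mul_rpow_of_nonneg _ _ hip, hC, ← ENNReal.rpow_mul,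
            mul_one_div, div_self hp0.ne', ENNReal.rpow_one]
  have hmul : Tendsto (fun n : ℕ => d t (x n) y * C) atTop (nhds 0) := by
    have := ENNReal.Tendsto.mul_const (h t) (Or.inr hCtop)
    simpa using this
  have hev : ∀ᶠ n : ℕ in atTop, d t (Ψ (x n)) (Ψ y) ≤ d t (x n) y * C := by
    have h1 : ∀ᶠ n : ℕ in atTop, d t (x n) y < 1 :=
      (h t).eventually (gt_mem_nhds one_pos)
    filter_upwards [h1] with n hn
    exact key n (hn.trans one_lt_top).ne
  exact tendsto_of_tendsto_of_tendsto_of_le_of_le' tendsto_const_nhds hmul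
    (Eventually.of_forall fun n => zero_le) hev
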